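/- Let A be a Bott matrix in 𝔅(n). Then: (i) for every permutation matrix P, Φ_P(A) := P A P⁻¹ is a Bott matrix; (ii) for every k ∈ {1,…,n}, Φ_k(A) is a Bott matrix and Φ_k(Φ_k(A)) = A; (iii) if ℓ ≠ m and A_ℓ = A_m, then Φ^{ℓ,m}(A) is a Bott matrix, its ℓ-th and m-th columns are again equal, and Φ^{ℓ,m}(Φ^{ℓ,m}(A)) = A. -/

import Mathlib

open Matrix

/-- A Bott matrix: conjugate by a permutation matrix to a strictly upper
triangular binary matrix. -/
def IsBott {n : ℕ} (A : Matrix (Fin n) (Fin n) (ZMod 2)) : Prop :=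
  ∃ (σ : Equiv.Perm (Fin n)) (B : Matrix (Fin n) (Fin n) (ZMod 2)),
    (∀ i j : Fin n, j ≤ i → B i j = 0) ∧
    A = σ.permMatrix (ZMod 2) * B * (σ⁻¹).permMatrix (ZMod 2)

/-- (Op1) conjugation by a permutation matrix: `Φ_P(A) = P A P⁻¹`. -/
def PhiP {n : ℕ} (σ : Equiv.Perm (Fin n)) (A : Matrix (Fin n) (Fin n) (ZMod 2)) :
    Matrix (Fin n) (Fin n) (ZMod 2) :=
  σ.permMatrix (ZMod 2) * A * (σ⁻¹).permMatrix (ZMod 2)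

/-- (Op2) `Φ_k(A)`: add the `k`-th column to every column having `1` in the
`k`-th row, i.e. `Φ_k(A)_j = A_j + A^k_j A_k`. -/
def Phi2 {n : ℕ} (k : Fin n) (A : Matrix (Fin n) (Fin n) (ZMod 2)) :
    Matrix (Fin n) (Fin n) (ZMod 2) :=
  fun i j => A i j + A k j * A i k

/-- (Op3) `Φ^{ℓ,m}(A)`: add the `ℓ`-th row to the `m`-th row. -/
def Phi3 {n : ℕ} (l m : Fin n) (A : Matrix (Fin n) (Fin n) (ZMod 2)) :
    Matrix (Fin n) (Fin n) (ZMod 2) :=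
  fun i j => if i = m then A l j + A m j else A i j

/-- Entrywise formula for conjugation by a permutation matrix. -/
lemma entry_conj {n : ℕ} (σ : Equiv.Perm (Fin n)) (B : Matrix (Fin n) (Fin n) (ZMod 2))
    (i j : Fin n) :
    (σ.permMatrix (ZMod 2) * B * (σ⁻¹).permMatrix (ZMod 2)) i j = B (σ i) (σ j) := by
  rw [Equiv.Perm.permMatrix, Equiv.Perm.permMatrix, PEquiv.toMatrix_toPEquiv_mul,
    PEquiv.mul_toMatrix_toPEquiv]
  simp only [Matrix.submatrix_apply, id]
  rfl

/-- A matrix admitting an acyclicity witness is Bott. -/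
lemma isBott_of_witness {n : ℕ} (C : Matrix (Fin n) (Fin n) (ZMod 2)) (f : Fin n → ℚ)
    (hf : ∀ i j, C i j ≠ 0 → f i < f j) : IsBott C := by
  refine ⟨(Tuple.sort f)⁻¹, Matrix.of fun i j => C (Tuple.sort f i) (Tuple.sort f j), ?_, ?_⟩
  · intro i j hji
    by_contra h
    have h1 := hf _ _ h
    have h2 : f (Tuple.sort f j) ≤ f (Tuple.sort f i) := Tuple.monotone_sort f hji
    exact absurd h1 (not_lt.mpr h2)
  · ext i j
    rw [entry_conj]
    simp

/-- A Bott matrix admits a ℕ-valued acyclicity witness. -/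
lemma witness_of_isBott {n : ℕ} (C : Matrix (Fin n) (Fin n) (ZMod 2)) (h : IsBott C) :
    ∃ g : Fin n → ℕ, ∀ i j, C i j ≠ 0 → g i < g j := by
  obtain ⟨σ, B, hB, hC⟩ := h
  refine ⟨fun x => (σ x : ℕ), fun i j hij => ?_⟩
  have : C i j = B (σ i) (σ j) := by rw [hC, entry_conj]
  rw [this] at hij
  by_contra hle
  exact hij (hB _ _ (by exact_mod_cast not_lt.mp hle))

theorem bott_operations {n : ℕ} (A : Matrix (Fin n) (Fin n) (ZMod 2))
    (hA : IsBott A) :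
    (∀ σ : Equiv.Perm (Fin n), IsBott (PhiP σ A)) ∧
    (∀ k : Fin n, IsBott (Phi2 k A) ∧ Phi2 k (Phi2 k A) = A) ∧
    (∀ l m : Fin n, l ≠ m → (∀ i, A i l = A i m) →
      IsBott (Phi3 l m A) ∧ (∀ i, Phi3 l m A i l = Phi3 l m A i m) ∧
      Phi3 l m (Phi3 l m A) = A) := by
  obtain ⟨g, hg⟩ := witness_of_isBott A hA
  have hdiag : ∀ i, A i i = 0 := by
    intro i
    by_contra h
    exact absurd (hg i i h) (lt_irrefl _)
  refine ⟨?_, ?_, ?_⟩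
  · -- (Op1)
    intro σ
    refine isBott_of_witness _ (fun x => (g (σ x) : ℚ)) (fun i j h => ?_)
    have : PhiP σ A i j = A (σ i) (σ j) := entry_conj σ A i j
    rw [this] at h
    exact_mod_cast hg _ _ h
  · -- (Op2)
    intro k
    constructor
    · refine isBott_of_witness _ (fun x => (g x : ℚ)) (fun i j h => ?_)
      simp only [Phi2] at h
      have : A i j ≠ 0 ∨ (A k j ≠ 0 ∧ A i k ≠ 0) := by
        by_contra hc
        push_neg at hc
        rcases hc with ⟨h1, h2⟩
        by_cases hkj : A k j = 0
        · simp [h1, hkj] at h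
        · simp [h1, h2 hkj] at h
      rcases this with h1 | ⟨h2, h3⟩
      · exact_mod_cast hg _ _ h1
      · exact_mod_cast lt_trans (hg _ _ h3) (hg _ _ h2)
    · ext i j
      simp only [Phi2, hdiag k]
      have key : ∀ a b c : ZMod 2, a + b * c + (b + b * 0) * (c + 0 * c) = a := by decide
      exact key (A i j) (A k j) (A i k)
  · -- (Op3)
    intro l m hlm hcol
    have hAlm : A l m = 0 := by rw [← hcol l]; exact hdiag l
    have hsum : ∀ a b : ZMod 2, a + b ≠ 0 → a ≠ 0 ∨ b ≠ 0 := by decide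
    refine ⟨?_, ?_, ?_⟩
    · -- IsBott (Phi3 l m A)
      by_cases hglm : g l < g m
      · refine isBott_of_witness _
          (fun x => if x = m then (g l : ℚ) + 1/2 else (g x : ℚ)) (fun i j h => ?_)
        simp only [Phi3] at h
        by_cases him : i = m
        · rw [if_pos him] at h ⊢
          have hj : j ≠ m := by
            intro hj
            rw [hj, hAlm, hdiag m] at h
            exact h (by decide)
          rw [if_neg hj]
          rcases hsum _ _ h with h1 | h1
          · have := hg _ _ h1
            have : (g l : ℚ) + 1 ≤ (g j : ℚ) := by exact_mod_cast this
            linarith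
          · have h2 := hg _ _ h1
            have h2 : (g m : ℚ) < (g j : ℚ) := by exact_mod_cast h2
            have h3 : (g l : ℚ) + 1 ≤ (g m : ℚ) := by exact_mod_cast hglm
            linarith
        · rw [if_neg him] at h ⊢
          by_cases hj : j = m
          · rw [if_pos hj]
            rw [hj] at h
            have h1 : A i l ≠ 0 := by rw [hcol i]; exact h
            have := hg _ _ h1
            have : (g i : ℚ) < (g l : ℚ) := by exact_mod_cast this
            linarith
          · rw [if_neg hj]
            exact_mod_cast hg _ _ h
      · refine isBott_of_witness _ (fun x => (g x : ℚ)) (fun i j h => ?_)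
        simp only [Phi3] at h
        by_cases him : i = m
        · rw [if_pos him] at h
          rw [him]
          rcases hsum _ _ h with h1 | h1
          · have := hg _ _ h1
            have h2 : g m ≤ g l := not_lt.mp hglm
            exact_mod_cast lt_of_le_of_lt h2 this
          · exact_mod_cast hg _ _ h1
        · rw [if_neg him] at h
          exact_mod_cast hg _ _ h
    · -- columns still equal
      intro i
      by_cases him : i = m
      · simp only [Phi3, him, if_pos rfl, hcol l, hcol m]
      · simp only [Phi3, if_neg him, hcol i]
    · -- involution
      have hZ : ∀ a b : ZMod 2, a + (a + b) = b := by decide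
      ext i j
      by_cases him : i = m
      · simp [Phi3, him, hlm, hZ]
      · simp only [Phi3, if_neg him]
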